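/- Let G be a countable group acting minimally on a compact Hausdorff space X. Then for every x ∈ X, there exists an element H of the stabilizer URS S_G(X) with H ≤ G_x; and for every H ∈ S_G(X), there exists x ∈ X with G_x⁰ ≤ H. -/

import Mathlib

/-- The Chabauty topology on the space of subgroups of `G`. -/
noncomputable instance chabautyTopology {G : Type*} [Group G] :
    TopologicalSpace (Subgroup G) :=
  TopologicalSpace.induced
    (fun H : Subgroup G => fun g : G => @decide (g ∈ H) (Classical.propDecidable _))
    inferInstance

/-- The germ stabilizer `G_x⁰`: elements acting trivially on a neighbourhood of `x`. -/
def germStabilizer (G : Type*) {X : Type*} [Group G] [TopologicalSpace X] [MulAction G X]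
    (x : X) : Subgroup G where
  carrier := {g : G | ∀ᶠ y in nhds x, g • y = y}
  one_mem' := Filter.Eventually.of_forall fun y => one_smul G y
  mul_mem' := by
    intro a b ha hb
    filter_upwards [ha, hb] with y hay hby
    rw [mul_smul, hby, hay]
  inv_mem' := by
    intro a ha
    filter_upwards [ha] with y hay
    nth_rewrite 1 [← hay]
    rw [inv_smul_smul]

open Filter Topology Set

section ChabautyAux

variable {G : Type*} [Group G]

/-- The embedding of `Subgroup G` into `G → Bool` defining the Chabauty topology. -/
noncomputable def chabEmb (H : Subgroup G) : G → Bool :=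
  fun g : G => @decide (g ∈ H) (Classical.propDecidable _)

lemma chabEmb_eq_true {H : Subgroup G} {g : G} : chabEmb H g = true ↔ g ∈ H :=
  @decide_eq_true_iff (g ∈ H) (Classical.propDecidable _)

lemma chabEmb_eq_false {H : Subgroup G} {g : G} : chabEmb H g = false ↔ g ∉ H := by
  rw [← Bool.not_eq_true, chabEmb_eq_true]

lemma chab_inducing : Topology.IsInducing (chabEmb (G := G)) := ⟨rfl⟩

lemma chab_continuous : Continuous (chabEmb (G := G)) :=
  continuous_induced_dom

lemma isClopen_chabMem (g : G) : IsClopen {K : Subgroup G | g ∈ K} := by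
  have h1 : IsClopen {f : G → Bool | f g = true} :=
    (isClopen_discrete ({true} : Set Bool)).preimage (continuous_apply g)
  have h2 : {K : Subgroup G | g ∈ K} = chabEmb ⁻¹' {f : G → Bool | f g = true} := by
    ext K
    simp only [Set.mem_setOf_eq, Set.mem_preimage, chabEmb_eq_true]
  rw [h2]
  exact h1.preimage chab_continuous

instance : CompactSpace (Subgroup G) := by
  refine ⟨isCompact_iff_ultrafilter_le_nhds.mpr fun 𝒱 _ => ?_⟩
  classical
  set H : Subgroup G :=
    { carrier := {g : G | {K : Subgroup G | g ∈ K} ∈ 𝒱}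
      one_mem' := by
        have : {K : Subgroup G | (1 : G) ∈ K} = Set.univ := by
          ext K; simp [Subgroup.one_mem]
        simp only [Set.mem_setOf_eq, this]
        exact univ_mem
      mul_mem' := by
        intro a b ha hb
        exact mem_of_superset (inter_mem ha hb) fun K hK => show a * b ∈ K from mul_mem hK.1 hK.2
      inv_mem' := by
        intro a ha
        exact mem_of_superset ha fun K hK => show a⁻¹ ∈ K from inv_mem hK } with hHdef
  refine ⟨H, Set.mem_univ _, ?_⟩
  rw [chab_inducing.nhds_eq_comap, ← Filter.map_le_iff_le_comap]
  have : Tendsto (chabEmb (G := G)) 𝒱 (nhds (chabEmb H)) := by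
    rw [tendsto_pi_nhds]
    intro g
    rw [nhds_discrete, tendsto_pure]
    by_cases hg : g ∈ H
    · have hmem : {K : Subgroup G | g ∈ K} ∈ 𝒱 := hg
      have : chabEmb H g = true := chabEmb_eq_true.mpr hg
      rw [this]
      exact mem_of_superset hmem fun K hK => chabEmb_eq_true.mpr hK
    · have hmem : {K : Subgroup G | g ∈ K} ∉ 𝒱 := hg
      have hc : {K : Subgroup G | g ∈ K}ᶜ ∈ 𝒱 := (Ultrafilter.compl_mem_iff_notMem).mpr hmem
      have : chabEmb H g = false := chabEmb_eq_false.mpr hg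
      rw [this]
      exact mem_of_superset hc fun K hK => chabEmb_eq_false.mpr hK
  exact this

end ChabautyAux

/-- For a minimal action of a countable group on a compact Hausdorff space, with
`S_G(X)` the closure of the stabilizers of continuity points of the stabilizer map:
every `x ∈ X` admits some `H ∈ S_G(X)` with `H ≤ G_x`, and every `H ∈ S_G(X)` admits
some `x ∈ X` with `G_x⁰ ≤ H`. -/
theorem stabilizer_urs_upper_semicontinuous {G X : Type*} [Group G] [Countable G]
    [TopologicalSpace X] [CompactSpace X] [T2Space X] [Nonempty X] [MulAction G X]
    (hcont : ∀ g : G, Continuous fun x : X => g • x)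
    (hmin : ∀ x : X, Dense (MulAction.orbit G x)) :
    (∀ x : X, ∃ H ∈ closure ((fun y : X => MulAction.stabilizer G y) ''
        {y : X | ContinuousAt (fun z : X => MulAction.stabilizer G z) y}),
        H ≤ MulAction.stabilizer G x) ∧
    (∀ H ∈ closure ((fun y : X => MulAction.stabilizer G y) ''
        {y : X | ContinuousAt (fun z : X => MulAction.stabilizer G z) y}),
        ∃ x : X, germStabilizer G x ≤ H) := by
  classical
  set f : X → Subgroup G := fun y => MulAction.stabilizer G y with hf
  set X₀ : Set X := {y : X | ContinuousAt (fun z : X => MulAction.stabilizer G z) y} with hX₀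
  -- The fixed-point sets are closed.
  have hFg_closed : ∀ g : G, IsClosed {y : X | g • y = y} := fun g =>
    isClosed_eq (hcont g) continuous_id
  -- Points away from all frontiers are continuity points of `f`.
  have hsub : (⋂ g : G, (frontier {y : X | g • y = y})ᶜ) ⊆ X₀ := by
    intro y hy
    have hy' : ∀ g : G, y ∉ frontier {z : X | g • z = z} := by
      intro g
      exact (Set.mem_iInter.mp hy g)
    show ContinuousAt f y
    rw [chab_inducing.continuousAt_iff, continuousAt_pi]
    intro g
    have hfr := hy' g
    rw [(hFg_closed g).frontier_eq] at hfr
    by_cases hmem : y ∈ {z : X | g • z = z}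
    · -- then `y ∈ interior`
      have hint : y ∈ interior {z : X | g • z = z} := by
        by_contra h
        exact hfr ⟨hmem, h⟩
      have hev : ∀ᶠ z in nhds y, (chabEmb ∘ f) z g = true := by
        filter_upwards [mem_interior_iff_mem_nhds.mp hint] with z hz
        exact chabEmb_eq_true.mpr hz
      have hconst : (fun z => (chabEmb ∘ f) z g) =ᶠ[nhds y] fun _ => true := hev
      exact continuousAt_const.congr hconst.symm
    · have hop : {z : X | g • z = z}ᶜ ∈ nhds y :=
        (hFg_closed g).isOpen_compl.mem_nhds hmem
      have hev : ∀ᶠ z in nhds y, (chabEmb ∘ f) z g = false := by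
        filter_upwards [hop] with z hz
        exact chabEmb_eq_false.mpr hz
      have hconst : (fun z => (chabEmb ∘ f) z g) =ᶠ[nhds y] fun _ => false := hev
      exact continuousAt_const.congr hconst.symm
  -- `X₀` is dense, by Baire.
  have hdense : Dense X₀ := by
    have : Dense (⋂ g : G, (frontier {y : X | g • y = y})ᶜ) := by
      apply dense_iInter_of_isOpen
      · intro g
        exact isClosed_frontier.isOpen_compl
      · intro g
        exact interior_eq_empty_iff_dense_compl.mp (interior_frontier (hFg_closed g))
    exact this.mono hsub
  constructor
  · -- Part 1
    intro x
    have hclx : x ∈ closure X₀ := hdense x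
    have hnb : (nhds x ⊓ Filter.principal X₀).NeBot :=
      mem_closure_iff_clusterPt.mp hclx
    let 𝒰 : Ultrafilter X := @Ultrafilter.of X (nhds x ⊓ Filter.principal X₀) hnb
    have h𝒰le : (𝒰 : Filter X) ≤ nhds x ⊓ Filter.principal X₀ := Ultrafilter.of_le _
    have h𝒰x : (𝒰 : Filter X) ≤ nhds x := h𝒰le.trans inf_le_left
    have hX₀𝒰 : X₀ ∈ 𝒰 := h𝒰le (by
      exact Filter.mem_inf_of_right (Filter.mem_principal_self X₀))
    let 𝒱 : Ultrafilter (Subgroup G) := 𝒰.map f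
    obtain ⟨H, _, hH⟩ := isCompact_univ.ultrafilter_le_nhds 𝒱 (by simp)
    refine ⟨H, ?_, ?_⟩
    · refine mem_closure_iff_ultrafilter.mpr ⟨𝒱, ?_, hH⟩
      exact Ultrafilter.mem_map.mpr (mem_of_superset hX₀𝒰 (Set.subset_preimage_image f X₀))
    · intro g hg
      have hC : {K : Subgroup G | g ∈ K} ∈ 𝒱 :=
        hH ((isClopen_chabMem g).isOpen.mem_nhds hg)
      have hFmem : {y : X | g • y = y} ∈ 𝒰 := by
        refine mem_of_superset (Ultrafilter.mem_map.mp hC) ?_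
        intro y hy
        exact hy
      have : x ∈ closure {y : X | g • y = y} :=
        mem_closure_iff_ultrafilter.mpr ⟨𝒰, hFmem, h𝒰x⟩
      rw [(hFg_closed g).closure_eq] at this
      exact this
  · -- Part 2
    intro H hH
    obtain ⟨𝒱, h𝒱mem, h𝒱le⟩ := mem_closure_iff_ultrafilter.mp hH
    have hcomap : (Filter.comap f (𝒱 : Filter (Subgroup G))).NeBot := by
      refine Filter.comap_neBot fun t ht => ?_
      have : t ∩ (f '' X₀) ∈ 𝒱 := inter_mem ht h𝒱mem
      obtain ⟨K, hKt, y, _, hKy⟩ := (𝒱.nonempty_of_mem this)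
      exact ⟨y, by rwa [hKy]⟩
    let 𝒰 : Ultrafilter X := @Ultrafilter.of X (Filter.comap f 𝒱) hcomap
    have h𝒰le : (𝒰 : Filter X) ≤ Filter.comap f 𝒱 := Ultrafilter.of_le _
    obtain ⟨x, _, h𝒰x⟩ := isCompact_univ.ultrafilter_le_nhds 𝒰 (by simp)
    refine ⟨x, fun g hg => ?_⟩
    have hFmem : {y : X | g • y = y} ∈ 𝒰 := h𝒰x hg
    have hCmem : {K : Subgroup G | g ∈ K} ∈ 𝒰.map f := by
      refine Ultrafilter.mem_map.mpr (mem_of_superset hFmem ?_)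
      intro y hy
      exact hy
    have hmaple : (𝒰.map f : Filter (Subgroup G)) ≤ nhds H := by
      calc (𝒰.map f : Filter (Subgroup G)) = Filter.map f 𝒰 := rfl
        _ ≤ Filter.map f (Filter.comap f 𝒱) := Filter.map_mono h𝒰le
        _ ≤ 𝒱 := Filter.map_comap_le
        _ ≤ nhds H := h𝒱le
    have : H ∈ closure {K : Subgroup G | g ∈ K} :=
      mem_closure_iff_ultrafilter.mpr ⟨𝒰.map f, hCmem, hmaple⟩
    rw [(isClopen_chabMem g).isClosed.closure_eq] at this
    exact this
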